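/- For a probability distribution Q on {1,2,...} with finite mean m and any l ∈ (0,1), the quantity −H(Q) − Σ_{i≥1} Q(i)·log(l^{i−1}(1−l)) is bounded below by m·KL(Ber(1/m) || Ber(1−l)). -/

import Mathlib

noncomputable def klBer (a b : ℝ) : ℝ :=
  a * Real.log (a / b) + (1 - a) * Real.log ((1 - a) / (1 - b))

theorem entropy_bound_gives_kl_lower_bound (l m : ℝ)
    (hl : 0 < l) (hl' : l < 1) (hm : 1 ≤ m)
    (Q : ℕ → ℝ) (hQnn : ∀ i, 0 ≤ Q i) (hQsum : (∑' i, Q i) = 1)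
    (hmean : (∑' i : ℕ, ((i : ℝ) + 1) * Q i) = m)
    (hent : Summable (fun i => Q i * Real.log (Q i)))
    (hsum : Summable (fun i : ℕ => Q i * Real.log (l ^ i * (1 - l)))) :
    m * klBer (1 / m) (1 - l) ≤
      (∑' i, Q i * Real.log (Q i)) - ∑' i : ℕ, Q i * Real.log (l ^ i * (1 - l)) := by
  have h1l : (0:ℝ) < 1 - l := by linarith
  have hQs : Summable Q := by
    by_contra h
    rw [tsum_eq_zero_of_not_summable h] at hQsum; norm_num at hQsum
  have hMs : Summable (fun i : ℕ => ((i : ℝ) + 1) * Q i) := by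
    by_contra h
    rw [tsum_eq_zero_of_not_summable h] at hmean; linarith
  have hiQs : Summable (fun i : ℕ => (i : ℝ) * Q i) := by
    have := hMs.sub hQs
    refine this.congr (fun i => ?_); ring
  have hiQsum : (∑' i : ℕ, (i : ℝ) * Q i) = m - 1 := by
    have : (∑' i : ℕ, ((i : ℝ) * Q i)) = (∑' i : ℕ, (((i:ℝ)+1) * Q i - Q i)) := by
      congr 1; funext i; ring
    rw [this, Summable.tsum_sub hMs hQs, hmean, hQsum]
  -- decompose the geometric-like tsum
  have hlogterm : ∀ i : ℕ, Q i * Real.log (l ^ i * (1 - l))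
      = ((i:ℝ) * Q i) * Real.log l + Q i * Real.log (1 - l) := by
    intro i
    rw [Real.log_mul (by positivity) (ne_of_gt h1l), Real.log_pow]
    ring
  have hsum2 : (∑' i : ℕ, Q i * Real.log (l ^ i * (1 - l)))
      = (m - 1) * Real.log l + Real.log (1 - l) := by
    have heq : (∑' i : ℕ, Q i * Real.log (l ^ i * (1 - l)))
        = ∑' i : ℕ, (((i:ℝ) * Q i) * Real.log l + Q i * Real.log (1 - l)) := by
      congr 1; funext i; exact hlogterm i
    rw [heq, Summable.tsum_add (hiQs.mul_right _) (hQs.mul_right _),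
      tsum_mul_right, tsum_mul_right, hiQsum, hQsum]
    ring
  rcases eq_or_lt_of_le hm with hm1 | hm1
  · -- m = 1 case
    subst hm1
    have hQzero : ∀ i : ℕ, 1 ≤ i → Q i = 0 := by
      intro i hi
      have h0 : (∑' i : ℕ, (i : ℝ) * Q i) = 0 := by rw [hiQsum]; ring
      have hle : (i:ℝ) * Q i ≤ 0 := by
        have := Summable.le_tsum hiQs i (fun j _ => mul_nonneg (Nat.cast_nonneg j) (hQnn j))
        linarith [h0 ▸ this]
      have hipos : (0:ℝ) < (i:ℝ) := by exact_mod_cast hi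
      nlinarith [hQnn i]
    have hQ0 : Q 0 = 1 := by
      have : (∑' i, Q i) = Q 0 := tsum_eq_single 0 (by
        intro i hi
        exact hQzero i (Nat.one_le_iff_ne_zero.mpr hi))
      rw [this] at hQsum; exact hQsum
    have hA : (∑' i, Q i * Real.log (Q i)) = 0 := by
      have : ∀ i, Q i * Real.log (Q i) = 0 := by
        intro i
        rcases Nat.eq_zero_or_pos i with h | h
        · subst h; rw [hQ0]; simp
        · rw [hQzero i h]; simp
      calc (∑' i, Q i * Real.log (Q i)) = ∑' _i : ℕ, (0:ℝ) := by
            congr 1; funext i; exact this i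
        _ = 0 := tsum_zero
    have hB : (∑' i : ℕ, Q i * Real.log (l ^ i * (1 - l))) = Real.log (1 - l) := by
      rw [hsum2]; ring
    rw [hA, hB]
    simp only [klBer]
    norm_num
    try rw [Real.log_div one_ne_zero (ne_of_gt h1l)]
    try simp
  · -- m > 1 case
    have hm0 : (0:ℝ) < m := by linarith
    set p : ℝ := 1 / m with hp_def
    have hp : 0 < p := by positivity
    have hp1 : p < 1 := by rw [hp_def]; rw [div_lt_one hm0]; linarith
    set r : ℝ := 1 - p with hr_def
    have hr : 0 < r := by simp [hr_def]; linarith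
    have hr1 : r < 1 := by simp [hr_def]; linarith
    have hPs : Summable (fun i : ℕ => p * r ^ i) :=
      (summable_geometric_of_lt_one hr.le hr1).mul_left p
    have hPsum : (∑' i : ℕ, p * r ^ i) = 1 := by
      rw [tsum_mul_left, tsum_geometric_of_lt_one hr.le hr1]
      have h1r : 1 - r = p := by rw [hr_def]; ring
      rw [h1r, mul_inv_cancel₀ (ne_of_gt hp)]
    -- Q log P summable and its value
    have hQlogP_eq : ∀ i : ℕ, Q i * Real.log (p * r ^ i)
        = Q i * Real.log p + ((i:ℝ) * Q i) * Real.log r := by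
      intro i
      rw [Real.log_mul (ne_of_gt hp) (by positivity), Real.log_pow]
      ring
    have hQlogPs : Summable (fun i : ℕ => Q i * Real.log (p * r ^ i)) := by
      have := (hQs.mul_right (Real.log p)).add (hiQs.mul_right (Real.log r))
      refine this.congr (fun i => ?_); exact (hQlogP_eq i).symm
    have hQlogPsum : (∑' i : ℕ, Q i * Real.log (p * r ^ i))
        = Real.log p + (m - 1) * Real.log r := by
      have heq : (∑' i : ℕ, Q i * Real.log (p * r ^ i))
          = ∑' i : ℕ, (Q i * Real.log p + ((i:ℝ) * Q i) * Real.log r) := by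
        congr 1; funext i; exact hQlogP_eq i
      rw [heq, Summable.tsum_add (hQs.mul_right _) (hiQs.mul_right _),
        tsum_mul_right, tsum_mul_right, hQsum, hiQsum]
      ring
    -- Gibbs inequality
    have hGibbs : (∑' i : ℕ, Q i * Real.log (p * r ^ i)) ≤ ∑' i, Q i * Real.log (Q i) := by
      have hterm : ∀ i : ℕ, Q i * Real.log (p * r ^ i) - Q i * Real.log (Q i)
          ≤ p * r ^ i - Q i := by
        intro i
        rcases eq_or_lt_of_le (hQnn i) with h0 | h0
        · rw [← h0]; simp; positivity
        · have hP0 : (0:ℝ) < p * r ^ i := by positivity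
          have : Real.log (p * r ^ i) - Real.log (Q i)
              = Real.log ((p * r ^ i) / Q i) := (Real.log_div (ne_of_gt hP0) (ne_of_gt h0)).symm
          have hle : Real.log ((p * r ^ i) / Q i) ≤ (p * r ^ i) / Q i - 1 :=
            Real.log_le_sub_one_of_pos (by positivity)
          have := mul_le_mul_of_nonneg_left hle (le_of_lt h0)
          calc Q i * Real.log (p * r ^ i) - Q i * Real.log (Q i)
              = Q i * Real.log ((p * r ^ i) / Q i) := by
                rw [Real.log_div (ne_of_gt hP0) (ne_of_gt h0)]; ring
            _ ≤ Q i * ((p * r ^ i) / Q i - 1) := this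
            _ = p * r ^ i - Q i := by field_simp
      have hsumle := Summable.tsum_le_tsum hterm (hQlogPs.sub hent) (hPs.sub hQs)
      rw [Summable.tsum_sub hQlogPs hent, Summable.tsum_sub hPs hQs, hPsum, hQsum] at hsumle
      linarith
    -- final arithmetic
    rw [hsum2]
    have hkl : m * klBer (1 / m) (1 - l)
        = Real.log p + (m - 1) * Real.log r - ((m - 1) * Real.log l + Real.log (1 - l)) := by
      simp only [klBer]
      have h1 : (1:ℝ) - (1 - l) = l := by ring
      have h2 : Real.log ((1/m) / (1 - l)) = Real.log p - Real.log (1 - l) := by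
        rw [Real.log_div (by positivity) (ne_of_gt h1l)]
      have h3 : Real.log ((1 - 1/m) / l) = Real.log r - Real.log l := by
        rw [Real.log_div (by rw [hr_def] at hr; linarith [hr]; ) (ne_of_gt hl)]
      rw [h1, h2, h3]
      field_simp
      ring
    rw [hkl]
    linarith
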